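/- Completeness of candidate generation: Let δ be a finite database of C-sequences, k ∈ ℕ, and ξ ∈ ℝ. If an L-sequence L with |L| ≤ k is a high utility interval-based pattern, i.e. u_max(L) ≥ ξ, then every sub-L-sequence L' of L is promising, i.e. LWU_k(L') ≥ ξ. -/

import Mathlib

open scoped Classical

variable {α : Type*}

/-- C-eventset containment: `(c, λ) ⊑ (c', λ')` iff `c ⊆ c'` and `λ = λ'`. -/
def EsetSub (σ τ : Finset α × ℕ) : Prop := σ.1 ⊆ τ.1 ∧ σ.2 = τ.2

/-- C-sequence containment: `C ⊑ C'` iff there are strictly increasing indices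
`j_1 < … < j_n` into `C'` with `σ_k ⊑ σ'_{j_k}` for all `k`. -/
def CSub (C C' : List (Finset α × ℕ)) : Prop :=
  ∃ D : List (Finset α × ℕ), D.Sublist C' ∧ List.Forall₂ EsetSub C D

/-- `C ∼ L` : the C-sequence `C` matches the L-sequence `L`. -/
def Matches (C : List (Finset α × ℕ)) (L : List (Finset α)) : Prop :=
  C.map Prod.fst = L

/-- `L` is a sub-L-sequence of `L'`. -/
def LSub (L L' : List (Finset α)) : Prop :=
  ∃ M : List (Finset α), M.Sublist L' ∧ List.Forall₂ (fun a b => a ⊆ b) L M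

/-- Utility of a C-eventset: `u_e (c, λ) = λ · Σ_{l ∈ c} p l`. -/
noncomputable def ue (p : α → ℝ) (σ : Finset α × ℕ) : ℝ := (σ.2 : ℝ) * ∑ l ∈ σ.1, p l

/-- Utility of a C-sequence: sum of the utilities of its C-eventsets. -/
noncomputable def us (p : α → ℝ) (C : List (Finset α × ℕ)) : ℝ := (C.map (ue p)).sum

/-- `u_maxk (C, k)`: the maximum utility of at most `k` C-eventsets in `C`. -/
noncomputable def umaxk (p : α → ℝ) (C : List (Finset α × ℕ)) (k : ℕ) : ℝ :=
  sSup { x : ℝ | ∃ C'', CSub C'' C ∧ C''.length ≤ k ∧ x = us p C'' }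

/-- `LWU_k(L)`: the L-sequence-weighted utilization of `L` w.r.t. maximum length `k`. -/
noncomputable def LWU (p : α → ℝ) (δ : Finset (List (Finset α × ℕ))) (k : ℕ)
    (L : List (Finset α)) : ℝ :=
  ∑ C ∈ δ, if ∃ C', CSub C' C ∧ Matches C' L then umaxk p C k else 0

/-- `u_max(L)`: the maximum utility of the L-sequence `L` in the database `δ`. -/
noncomputable def umax (p : α → ℝ) (δ : Finset (List (Finset α × ℕ)))
    (L : List (Finset α)) : ℝ :=
  ∑ C ∈ δ, sSup ({ x : ℝ | ∃ C', CSub C' C ∧ Matches C' L ∧ x = us p C' } ∪ {0})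

lemma ue_nonneg (p : α → ℝ) (hp : ∀ l, 0 ≤ p l) (σ : Finset α × ℕ) : 0 ≤ ue p σ :=
  mul_nonneg (Nat.cast_nonneg _) (Finset.sum_nonneg fun l _ => hp l)

lemma us_nonneg (p : α → ℝ) (hp : ∀ l, 0 ≤ p l) (C : List (Finset α × ℕ)) :
    0 ≤ us p C :=
  List.sum_nonneg (by
    intro x hx
    obtain ⟨σ, _, rfl⟩ := List.mem_map.1 hx
    exact ue_nonneg p hp σ)

lemma ue_mono (p : α → ℝ) (hp : ∀ l, 0 ≤ p l) {σ τ : Finset α × ℕ}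
    (h : EsetSub σ τ) : ue p σ ≤ ue p τ := by
  unfold ue
  rw [h.2]
  exact mul_le_mul_of_nonneg_left
    (Finset.sum_le_sum_of_subset_of_nonneg h.1 (fun l _ _ => hp l)) (Nat.cast_nonneg _)

lemma us_forall₂_le (p : α → ℝ) (hp : ∀ l, 0 ≤ p l)
    {C D : List (Finset α × ℕ)} (h : List.Forall₂ EsetSub C D) :
    us p C ≤ us p D := by
  induction h with
  | nil => exact le_refl _
  | cons hab _ ih =>
      unfold us at *
      simp only [List.map_cons, List.sum_cons]
      exact add_le_add (ue_mono p hp hab) ih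

lemma us_sublist_le (p : α → ℝ) (hp : ∀ l, 0 ≤ p l)
    {C D : List (Finset α × ℕ)} (h : C.Sublist D) :
    us p C ≤ us p D := by
  induction h with
  | slnil => exact le_refl _
  | cons b _ ih =>
      unfold us at *
      simp only [List.map_cons, List.sum_cons]
      exact le_add_of_nonneg_of_le (ue_nonneg p hp b) ih
  | cons_cons b _ ih =>
      unfold us at *
      simp only [List.map_cons, List.sum_cons]
      exact add_le_add_right ih _

lemma us_csub_le (p : α → ℝ) (hp : ∀ l, 0 ≤ p l)
    {C D : List (Finset α × ℕ)} (h : CSub C D) : us p C ≤ us p D := by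
  obtain ⟨E, hE, hF⟩ := h
  exact le_trans (us_forall₂_le p hp hF) (us_sublist_le p hp hE)

lemma bddAbove_umaxk_set (p : α → ℝ) (hp : ∀ l, 0 ≤ p l)
    (C : List (Finset α × ℕ)) (k : ℕ) :
    BddAbove { x : ℝ | ∃ C'', CSub C'' C ∧ C''.length ≤ k ∧ x = us p C'' } := by
  refine ⟨us p C, ?_⟩
  rintro x ⟨C'', hsub, _, rfl⟩
  exact us_csub_le p hp hsub

lemma csub_nil (C : List (Finset α × ℕ)) : CSub [] C :=
  ⟨[], List.nil_sublist _, List.Forall₂.nil⟩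

lemma umaxk_nonneg (p : α → ℝ) (hp : ∀ l, 0 ≤ p l)
    (C : List (Finset α × ℕ)) (k : ℕ) : 0 ≤ umaxk p C k := by
  refine le_csSup (bddAbove_umaxk_set p hp C k) ?_
  exact ⟨[], csub_nil C, Nat.zero_le _, rfl⟩

lemma forall₂_sublist {R : Finset α × ℕ → Finset α × ℕ → Prop}
    {C F E : List (Finset α × ℕ)} (h : List.Forall₂ R C F) (hE : E.Sublist C) :
    ∃ F', F'.Sublist F ∧ List.Forall₂ R E F' := by
  induction h generalizing E with
  | nil =>
      rw [List.sublist_nil] at hE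
      subst hE; exact ⟨[], List.nil_sublist _, List.Forall₂.nil⟩
  | @cons a b C₀ F₀ hab _ ih =>
      rcases List.sublist_cons_iff.1 hE with hE' | ⟨E', rfl, hE'⟩
      · obtain ⟨F', hF', hR⟩ := ih hE'
        exact ⟨F', hF'.trans (List.sublist_cons_self _ _), hR⟩
      · obtain ⟨F', hF', hR⟩ := ih hE'
        exact ⟨b :: F', hF'.cons₂ _, List.Forall₂.cons hab hR⟩

lemma esetSub_trans {σ τ ρ : Finset α × ℕ} (h1 : EsetSub σ τ) (h2 : EsetSub τ ρ) :
    EsetSub σ ρ := ⟨h1.1.trans h2.1, h1.2.trans h2.2⟩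

lemma forall₂_esetSub_trans {C D E : List (Finset α × ℕ)}
    (h1 : List.Forall₂ EsetSub C D) (h2 : List.Forall₂ EsetSub D E) :
    List.Forall₂ EsetSub C E := by
  induction h2 generalizing C with
  | nil => exact h1
  | cons hab _ ih =>
      cases h1 with
      | cons h1ab h1t => exact List.Forall₂.cons (esetSub_trans h1ab hab) (ih h1t)

lemma csub_trans {C D E : List (Finset α × ℕ)} (h1 : CSub C D) (h2 : CSub D E) :
    CSub C E := by
  obtain ⟨F, hF, hCF⟩ := h1
  obtain ⟨G, hG, hDG⟩ := h2
  obtain ⟨G', hG', hFG'⟩ := forall₂_sublist hDG hF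
  exact ⟨G', hG'.trans hG, forall₂_esetSub_trans hCF hFG'⟩

lemma exists_match_of_forall₂ {L' : List (Finset α)} {E : List (Finset α × ℕ)}
    (h : List.Forall₂ (fun a b => a ⊆ b.1) L' E) :
    ∃ D : List (Finset α × ℕ), List.Forall₂ EsetSub D E ∧ D.map Prod.fst = L' := by
  induction h with
  | nil => exact ⟨[], List.Forall₂.nil, rfl⟩
  | @cons a e _ _ hae _ ih =>
      obtain ⟨D, hD, hmap⟩ := ih
      exact ⟨(a, e.2) :: D, List.Forall₂.cons ⟨hae, rfl⟩ hD, by simp [hmap]⟩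

/-- Completeness of candidate generation: if `|L| ≤ k` and
`u_max(L) ≥ ξ`, then every sub-L-sequence `L'` of `L` is promising: `LWU_k(L') ≥ ξ`. -/
theorem candidate_complete (p : α → ℝ) (hp : ∀ l, 0 ≤ p l)
    (δ : Finset (List (Finset α × ℕ))) (k : ℕ) (ξ : ℝ)
    (L : List (Finset α)) (hL : L.length ≤ k) (hhigh : ξ ≤ umax p δ L) :
    ∀ L' : List (Finset α), LSub L' L → ξ ≤ LWU p δ k L' := by
  intro L' hsub
  refine le_trans hhigh ?_
  unfold umax LWU
  refine Finset.sum_le_sum ?_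
  intro C _
  -- target nonneg
  have htarget : (0 : ℝ) ≤ if ∃ C', CSub C' C ∧ Matches C' L' then umaxk p C k else 0 := by
    split
    · exact umaxk_nonneg p hp C k
    · exact le_refl 0
  refine Real.sSup_le ?_ htarget
  rintro x (⟨C', hC'C, hmatch, rfl⟩ | hx)
  swap
  · simp only [Set.mem_singleton_iff] at hx
    exact hx ▸ htarget
  -- construct D ⊑ C' matching L'
  obtain ⟨M, hML, hF⟩ := hsub
  have hLmap : C'.map Prod.fst = L := hmatch
  rw [← hLmap] at hML
  obtain ⟨E, hEC', hEmap⟩ := List.sublist_map_iff.1 hML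
  have hF' : List.Forall₂ (fun a (b : Finset α × ℕ) => a ⊆ b.1) L' E := by
    rw [hEmap] at hF
    exact (List.forall₂_map_right_iff).1 hF
  obtain ⟨D, hDE, hDmap⟩ := exists_match_of_forall₂ hF'
  have hDC : CSub D C := csub_trans ⟨E, hEC', hDE⟩ hC'C
  have hcond : ∃ C'', CSub C'' C ∧ Matches C'' L' := ⟨D, hDC, hDmap⟩
  rw [if_pos hcond]
  -- us C' is in the umaxk set
  have hlen : C'.length ≤ k := by
    have := congrArg List.length hLmap
    simp only [List.length_map] at this
    omega
  exact le_csSup (bddAbove_umaxk_set p hp C k) ⟨C', hC'C, hlen, rfl⟩
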